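/- Let K ≥ 2, let X be a measurable space, let ν be a finite measure on X × Fin K, and let ν̄ be a measure on X × Fin K with ν̄(A × {k}) = (1/(K-1)) ∑_{j ≠ k} ν(A × {j}) for all measurable A ⊆ X and all k. Let L, L̄ : X × Fin K → ℝ be measurable with L integrable with respect to ν and L̄ integrable with respect to ν̄, and suppose there are constants M₁, M₂ ∈ ℝ such that for every x ∈ X, ∑_{j=1}^K L(x,j) = M₁ and L(x,k) + L̄(x,k) = M₂ for every k, and 2·M₁ = K·M₂. Then ∫ L dν = (K-1) ∫ L̄ dν̄ - M₁·ν̄(X × Fin K) + M₂·ν̄(X × Fin K); in particular, when ν̄ is a probability measure, R(g;ℓ) = (K-1)·E_{ν̄}[ℓ̄] - M₁ + M₂. -/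

import Mathlib

open MeasureTheory
open scoped ENNReal

theorem corollary_ishida_recovery
    (K : ℕ) (hK : 2 ≤ K) (X : Type*) [MeasurableSpace X]
    (ν νbar : Measure (X × Fin K)) [IsFiniteMeasure ν]
    (hcomp : ∀ (A : Set X), MeasurableSet A → ∀ k : Fin K,
      νbar (A ×ˢ ({k} : Set (Fin K))) =
        ((K : ℝ≥0∞) - 1)⁻¹ * ∑ j ∈ Finset.univ.erase k, ν (A ×ˢ ({j} : Set (Fin K))))
    (L Lbar : X × Fin K → ℝ)
    (hLmeas : Measurable L) (hLbarmeas : Measurable Lbar)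
    (hLint : Integrable L ν) (hLbarint : Integrable Lbar νbar)
    (M₁ M₂ : ℝ)
    (hM₁ : ∀ x : X, ∑ j, L (x, j) = M₁)
    (hM₂ : ∀ (x : X) (k : Fin K), L (x, k) + Lbar (x, k) = M₂)
    (hM : 2 * M₁ = (K : ℝ) * M₂) :
    (∫ p, L p ∂ν =
      ((K : ℝ) - 1) * ∫ p, Lbar p ∂νbar
        - M₁ * (νbar Set.univ).toReal + M₂ * (νbar Set.univ).toReal) ∧
    (IsProbabilityMeasure νbar →
      ∫ p, L p ∂ν = ((K : ℝ) - 1) * ∫ p, Lbar p ∂νbar - M₁ + M₂) := by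
  classical
  -- numeric facts
  have hK1 : 1 < K := lt_of_lt_of_le one_lt_two hK
  have hKR : (2:ℝ) ≤ (K:ℝ) := by exact_mod_cast hK
  have hK1R : (K:ℝ) - 1 ≠ 0 := sub_ne_zero.mpr (by intro h; rw [h] at hKR; linarith)
  have hKtop : (K:ℝ≥0∞) ≠ ⊤ := ENNReal.natCast_ne_top K
  have h1leK : (1:ℝ≥0∞) ≤ (K:ℝ≥0∞) := by exact_mod_cast hK1.le
  have hsub0 : (K:ℝ≥0∞) - 1 ≠ 0 := by
    rw [ne_eq, tsub_eq_zero_iff_le]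
    exact not_le.mpr (by exact_mod_cast hK1)
  have hsubtop : (K:ℝ≥0∞) - 1 ≠ ⊤ := ENNReal.sub_ne_top hKtop
  set c : ℝ≥0∞ := ((K:ℝ≥0∞) - 1)⁻¹ with hc
  have hc0 : c ≠ 0 := ENNReal.inv_ne_zero.mpr hsubtop
  have hctop : c ≠ ⊤ := ENNReal.inv_ne_top.mpr hsub0
  have hcreal : c.toReal = ((K:ℝ) - 1)⁻¹ := by
    rw [hc, ENNReal.toReal_inv, ENNReal.toReal_sub_of_le h1leK hKtop]
    simp
  -- the slice measures
  set νj : Fin K → Measure X :=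
    fun j => (ν.restrict (Set.univ ×ˢ ({j} : Set (Fin K)))).map Prod.fst with hνjdef
  have hprodmk : ∀ k : Fin K, Measurable fun x : X => (x, k) :=
    fun k => measurable_id.prodMk measurable_const
  have hνjA : ∀ (j : Fin K) (A : Set X), MeasurableSet A →
      νj j A = ν (A ×ˢ ({j} : Set (Fin K))) := by
    intro j A hA
    simp only [hνjdef]
    rw [Measure.map_apply measurable_fst hA, Measure.restrict_apply (measurable_fst hA)]
    congr 1
    ext ⟨x, m⟩
    simp only [Set.mem_inter_iff, Set.mem_preimage, Set.mem_prod, Set.mem_univ, true_and,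
      Set.mem_singleton_iff]
  have hfin : ∀ j, IsFiniteMeasure (νj j) := by
    intro j
    refine ⟨?_⟩
    rw [hνjA j Set.univ MeasurableSet.univ]
    exact measure_lt_top ν _
  have hne : ∀ j : Fin K, νj j Set.univ ≠ ⊤ := by
    intro j; haveI := hfin j; exact measure_ne_top _ _
  -- decomposition of any measure over slices
  have hdecomp : ∀ (μ : Measure (X × Fin K)) (S : Set (X × Fin K)), MeasurableSet S →
      μ S = ∑ k : Fin K, μ (((fun x => (x, k)) ⁻¹' S) ×ˢ ({k} : Set (Fin K))) := by
    intro μ S hS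
    have hU : S = ⋃ k : Fin K, ((fun x => (x, k)) ⁻¹' S) ×ˢ ({k} : Set (Fin K)) := by
      ext ⟨x, m⟩
      simp only [Set.mem_iUnion, Set.mem_prod, Set.mem_preimage, Set.mem_singleton_iff]
      constructor
      · intro h; exact ⟨m, h, rfl⟩
      · rintro ⟨k, hk, rfl⟩; exact hk
    have hdisj : Pairwise (Function.onFun Disjoint
        fun k : Fin K => ((fun x => (x, k)) ⁻¹' S) ×ˢ ({k} : Set (Fin K))) := by
      intro i j hij
      rw [Function.onFun, Set.disjoint_left]
      rintro ⟨x, m⟩ hi hj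
      simp only [Set.mem_prod, Set.mem_singleton_iff] at hi hj
      exact hij (hi.2.symm.trans hj.2)
    have hmeas : ∀ k : Fin K,
        MeasurableSet (((fun x => (x, k)) ⁻¹' S) ×ˢ ({k} : Set (Fin K))) :=
      fun k => ((hprodmk k) hS).prod (measurableSet_singleton k)
    conv_lhs => rw [hU]
    rw [measure_iUnion hdisj hmeas, tsum_fintype]
  have hsetinter : ∀ (S : Set (X × Fin K)) (j : Fin K),
      S ∩ (Set.univ ×ˢ ({j} : Set (Fin K))) =
        ((fun x => (x, j)) ⁻¹' S) ×ˢ ({j} : Set (Fin K)) := by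
    intro S j
    ext ⟨x, m⟩
    simp only [Set.mem_inter_iff, Set.mem_prod, Set.mem_univ, true_and,
      Set.mem_singleton_iff, Set.mem_preimage]
    constructor
    · rintro ⟨hS, rfl⟩; exact ⟨hS, rfl⟩
    · rintro ⟨hS, rfl⟩; exact ⟨hS, rfl⟩
  -- ν as a sum of restrictions
  have hνsum : ν = ∑ j : Fin K, ν.restrict (Set.univ ×ˢ ({j} : Set (Fin K))) := by
    ext S hS
    rw [Measure.finset_sum_apply, hdecomp ν S hS]
    refine Finset.sum_congr rfl fun k _ => ?_
    rw [Measure.restrict_apply hS, hsetinter]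
  -- ae identification on slices
  have hres_ae : ∀ (f : X × Fin K → ℝ) (j : Fin K),
      f =ᵐ[ν.restrict (Set.univ ×ˢ ({j} : Set (Fin K)))] fun p => f (p.1, j) := by
    intro f j
    filter_upwards [ae_restrict_mem (MeasurableSet.univ.prod (measurableSet_singleton j))]
      with p hp
    have h2 : p.2 = j := hp.2
    have hpj : p = (p.1, j) := by rw [← h2]
    rw [← hpj]
  have hsliceI : ∀ (f : X × Fin K → ℝ), Measurable f → ∀ j : Fin K,
      Integrable f (ν.restrict (Set.univ ×ˢ ({j} : Set (Fin K)))) →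
      Integrable (fun x => f (x, j)) (νj j) ∧
      ∫ p, f p ∂(ν.restrict (Set.univ ×ˢ ({j} : Set (Fin K)))) = ∫ x, f (x, j) ∂(νj j) := by
    intro f hf j hfi
    have hgmeas : Measurable fun x => f (x, j) := hf.comp (hprodmk j)
    have h1 : Integrable (fun p : X × Fin K => f (p.1, j))
        (ν.restrict (Set.univ ×ˢ ({j} : Set (Fin K)))) := hfi.congr (hres_ae f j)
    constructor
    · simp only [hνjdef]
      exact (integrable_map_measure hgmeas.aestronglyMeasurable
        measurable_fst.aemeasurable).mpr h1
    · rw [integral_congr_ae (hres_ae f j)]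
      simp only [hνjdef]
      exact (integral_map measurable_fst.aemeasurable hgmeas.aestronglyMeasurable).symm
  have hLres : ∀ j : Fin K, Integrable L (ν.restrict (Set.univ ×ˢ ({j} : Set (Fin K)))) :=
    fun j => hLint.restrict
  have hA : ∫ p, L p ∂ν = ∑ j : Fin K, ∫ x, L (x, j) ∂(νj j) := by
    conv_lhs => rw [hνsum]
    rw [integral_finset_sum_measure (fun j _ => hLres j)]
    exact Finset.sum_congr rfl fun j _ => (hsliceI L hLmeas j (hLres j)).2
  -- the complementary measure as a sum of mapped measures
  set μk : Fin K → Measure X := fun k => c • ∑ j ∈ Finset.univ.erase k, νj j with hμkdef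
  have hbar : νbar = ∑ k : Fin K, (μk k).map (fun x => (x, k)) := by
    ext S hS
    rw [Measure.finset_sum_apply, hdecomp νbar S hS]
    refine Finset.sum_congr rfl fun k _ => ?_
    rw [hcomp _ ((hprodmk k) hS) k, Measure.map_apply (hprodmk k) hS]
    simp only [hμkdef, Measure.smul_apply, smul_eq_mul, Measure.finset_sum_apply]
    congr 1
    exact Finset.sum_congr rfl fun j _ => (hνjA j _ ((hprodmk k) hS)).symm
  have hLbarint' : ∀ k : Fin K, Integrable Lbar ((μk k).map (fun x => (x, k))) := by
    intro k
    rw [hbar] at hLbarint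
    exact integrable_finset_sum_measure.mp hLbarint k (Finset.mem_univ k)
  have hLbarμk : ∀ k : Fin K, Integrable (fun x => Lbar (x, k)) (μk k) := by
    intro k
    exact (integrable_map_measure hLbarmeas.aestronglyMeasurable
      (hprodmk k).aemeasurable).mp (hLbarint' k)
  have hLbarνj : ∀ k : Fin K, ∀ j ∈ Finset.univ.erase k,
      Integrable (fun x => Lbar (x, k)) (νj j) := by
    intro k j hj
    have h1 : Integrable (fun x => Lbar (x, k)) (c • ∑ j ∈ Finset.univ.erase k, νj j) := by
      have := hLbarμk k
      simp only [hμkdef] at this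
      exact this
    exact integrable_finset_sum_measure.mp ((integrable_smul_measure hc0 hctop).mp h1) j hj
  have hLν : ∀ k j : Fin K, Integrable (fun x => L (x, k)) (νj j) := by
    intro k j
    haveI := hfin j
    by_cases hkj : j = k
    · subst hkj
      exact (hsliceI L hLmeas j (hLres j)).1
    · have h1 := hLbarνj k j (Finset.mem_erase.mpr ⟨hkj, Finset.mem_univ j⟩)
      have h2 : (fun x => L (x, k)) = fun x => M₂ - Lbar (x, k) := by
        funext x; have := hM₂ x k; linarith
      rw [h2]
      exact (integrable_const M₂).sub h1
  -- the real masses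
  set τ : Fin K → ℝ := fun j => (νj j Set.univ).toReal with hτdef
  set T : ℝ := (ν Set.univ).toReal with hTdef
  have hτT : ∑ j : Fin K, τ j = T := by
    have h1 : ν Set.univ = ∑ j : Fin K, νj j Set.univ := by
      rw [hdecomp ν Set.univ MeasurableSet.univ]
      refine Finset.sum_congr rfl fun j _ => ?_
      rw [Set.preimage_univ]
      exact (hνjA j Set.univ MeasurableSet.univ).symm
    rw [hTdef, h1, ENNReal.toReal_sum (fun j _ => hne j)]
  -- compute the complementary integral
  have hB1 : ∫ p, Lbar p ∂νbar = ∑ k : Fin K, ∫ x, Lbar (x, k) ∂(μk k) := by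
    conv_lhs => rw [hbar]
    rw [integral_finset_sum_measure (fun k _ => hLbarint' k)]
    exact Finset.sum_congr rfl fun k _ =>
      integral_map (hprodmk k).aemeasurable hLbarmeas.aestronglyMeasurable
  have hB2 : ∀ k : Fin K, ∫ x, Lbar (x, k) ∂(μk k)
      = ((K:ℝ) - 1)⁻¹ * ∑ j ∈ Finset.univ.erase k,
          (M₂ * τ j - ∫ x, L (x, k) ∂(νj j)) := by
    intro k
    have hsm : ∫ x, Lbar (x, k) ∂(μk k)
        = c.toReal • ∫ x, Lbar (x, k) ∂(∑ j ∈ Finset.univ.erase k, νj j) := by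
      simp only [hμkdef]
      exact integral_smul_measure _ _
    rw [hsm, integral_finset_sum_measure (fun j hj => hLbarνj k j hj), hcreal, smul_eq_mul]
    congr 1
    refine Finset.sum_congr rfl fun j hj => ?_
    haveI := hfin j
    have h2 : (fun x => Lbar (x, k)) = fun x => M₂ - L (x, k) := by
      funext x; have := hM₂ x k; linarith
    rw [h2, integral_sub (integrable_const M₂) (hLν k j), integral_const, smul_eq_mul,
      Measure.real, hτdef, mul_comm]
  have hB : ((K:ℝ) - 1) * ∫ p, Lbar p ∂νbar
      = ∑ k : Fin K, ∑ j ∈ Finset.univ.erase k, (M₂ * τ j - ∫ x, L (x, k) ∂(νj j)) := by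
    rw [hB1, Finset.mul_sum]
    refine Finset.sum_congr rfl fun k _ => ?_
    rw [hB2 k, ← mul_assoc, mul_inv_cancel₀ hK1R, one_mul]
  have hsum1 : ∀ j : Fin K, ∑ k : Fin K, ∫ x, L (x, k) ∂(νj j) = M₁ * τ j := by
    intro j
    haveI := hfin j
    rw [← integral_finset_sum _ (fun k _ => hLν k j)]
    have hconst : (fun x => ∑ k : Fin K, L (x, k)) = fun _ => M₁ := funext fun x => hM₁ x
    rw [hconst, integral_const, smul_eq_mul, Measure.real, hτdef, mul_comm]
  have hDS : ∑ k : Fin K, ∑ j ∈ Finset.univ.erase k, (M₂ * τ j - ∫ x, L (x, k) ∂(νj j))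
      = (K:ℝ) * M₂ * T - M₁ * T - M₂ * T + ∫ p, L p ∂ν := by
    have h1 : ∀ k : Fin K,
        ∑ j ∈ Finset.univ.erase k, (M₂ * τ j - ∫ x, L (x, k) ∂(νj j))
        = (∑ j : Fin K, (M₂ * τ j - ∫ x, L (x, k) ∂(νj j)))
          - (M₂ * τ k - ∫ x, L (x, k) ∂(νj k)) :=
      fun k => Finset.sum_erase_eq_sub (Finset.mem_univ k)
    simp only [h1]
    rw [Finset.sum_sub_distrib]
    have h2 : ∑ k : Fin K, ∑ j : Fin K, (M₂ * τ j - ∫ x, L (x, k) ∂(νj j))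
        = (K:ℝ) * M₂ * T - M₁ * T := by
      rw [Finset.sum_comm]
      have h2a : ∀ j : Fin K, ∑ k : Fin K, (M₂ * τ j - ∫ x, L (x, k) ∂(νj j))
          = ((K:ℝ) * M₂ - M₁) * τ j := by
        intro j
        rw [Finset.sum_sub_distrib, Finset.sum_const, Finset.card_univ, Fintype.card_fin,
          nsmul_eq_mul, hsum1 j]
        ring
      simp only [h2a]
      rw [← Finset.mul_sum, hτT]
      ring
    have h3 : ∑ k : Fin K, (M₂ * τ k - ∫ x, L (x, k) ∂(νj k)) = M₂ * T - ∫ p, L p ∂ν := by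
      rw [Finset.sum_sub_distrib, ← Finset.mul_sum, hτT, hA]
    rw [h2, h3]
    ring
  -- total mass of νbar
  have hνbaru : (νbar Set.univ).toReal = T := by
    have h1 : νbar Set.univ
        = ∑ k : Fin K, c * ∑ j ∈ Finset.univ.erase k, νj j Set.univ := by
      rw [hdecomp νbar Set.univ MeasurableSet.univ]
      refine Finset.sum_congr rfl fun k _ => ?_
      rw [Set.preimage_univ, hcomp Set.univ MeasurableSet.univ k]
      congr 1
      exact Finset.sum_congr rfl fun j _ => (hνjA j Set.univ MeasurableSet.univ).symm
    have hterm : ∀ k : Fin K, (c * ∑ j ∈ Finset.univ.erase k, νj j Set.univ) ≠ ⊤ := by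
      intro k
      refine ENNReal.mul_ne_top hctop ?_
      exact (ENNReal.sum_lt_top.mpr (fun j _ => lt_top_iff_ne_top.mpr (hne j))).ne
    have h2 : ∀ k : Fin K, (c * ∑ j ∈ Finset.univ.erase k, νj j Set.univ).toReal
        = ((K:ℝ) - 1)⁻¹ * ∑ j ∈ Finset.univ.erase k, τ j := by
      intro k
      rw [ENNReal.toReal_mul, hcreal, ENNReal.toReal_sum (fun j _ => hne j)]
    have h3 : ∀ k : Fin K, ∑ j ∈ Finset.univ.erase k, τ j = T - τ k := by
      intro k
      rw [Finset.sum_erase_eq_sub (Finset.mem_univ k), hτT]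
    rw [h1, ENNReal.toReal_sum (fun k _ => hterm k)]
    simp only [h2, h3]
    rw [← Finset.mul_sum, Finset.sum_sub_distrib, Finset.sum_const, Finset.card_univ,
      Fintype.card_fin, nsmul_eq_mul, hτT,
      show (K:ℝ) * T - T = ((K:ℝ) - 1) * T by ring, inv_mul_cancel_left₀ hK1R]
  have main : ∫ p, L p ∂ν =
      ((K : ℝ) - 1) * ∫ p, Lbar p ∂νbar
        - M₁ * (νbar Set.univ).toReal + M₂ * (νbar Set.univ).toReal := by
    rw [hνbaru, hB, hDS]
    have hMT : 2 * M₁ * T = (K:ℝ) * M₂ * T := by rw [hM]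
    linarith
  refine ⟨main, fun hp => ?_⟩
  have h1 : (νbar Set.univ).toReal = 1 := by rw [hp.measure_univ, ENNReal.toReal_one]
  rw [main, h1, mul_one, mul_one]
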